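/- Let ξ ∈ ℚ[[x]] be the unique formal power series with zero constant term satisfying x·ξ(x) − x³ − ξ(x)³ = 0, and let G(x) = x³ ∑_{i≥0} Q_{i,0} x^i ∈ ℚ[[x]], where Q_{i,0} is the number of knight walks ending at (i,0). Then G(x) + G(ξ(x)) = x² ξ(x)² as an identity of formal power series in ℚ[[x]] (the composition G(ξ(x)) is well defined since ξ has zero constant term). -/

import Mathlib

/-- `w : Fin (n+1) → ℤ × ℤ` is a knight walk of length `n`: it starts at `(1,1)`, takes its
steps in `{(-1,2), (2,-1)}` and all its vertices have nonnegative coordinates. -/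
def IsKnightWalk (n : ℕ) (w : Fin (n + 1) → ℤ × ℤ) : Prop :=
  w 0 = (1, 1) ∧
  (∀ k : Fin n, w k.succ - w k.castSucc ∈ ({(-1, 2), (2, -1)} : Set (ℤ × ℤ))) ∧
  ∀ k, 0 ≤ (w k).1 ∧ 0 ≤ (w k).2

namespace KW

def Walks (a b : ℤ) : Type :=
  {p : Σ n : ℕ, Fin (n + 1) → ℤ × ℤ //
    IsKnightWalk p.1 p.2 ∧ p.2 (Fin.last p.1) = (a, b)}

theorem sumCoord {n : ℕ} {w : Fin (n + 1) → ℤ × ℤ} (hw : IsKnightWalk n w) :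
    ∀ k : Fin (n + 1), (w k).1 + (w k).2 = 2 + k := by
  intro k
  induction k using Fin.induction with
  | zero => rw [hw.1]; norm_num
  | succ k ih =>
    have hd := hw.2.1 k
    simp only [Set.mem_insert_iff, Set.mem_singleton_iff] at hd
    rcases hd with h | h <;>
    · have hw' : w k.succ = w k.castSucc + (w k.succ - w k.castSucc) := by ring
      rw [h] at hw'
      rw [hw']
      simp only [Prod.fst_add, Prod.snd_add, Fin.val_succ, Fin.coe_castSucc] at ih ⊢
      push_cast at ih ⊢
      omega

theorem length_eq {a b : ℤ} (p : Walks a b) : (p.1.1 : ℤ) = a + b - 2 := by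
  have := sumCoord p.2.1 (Fin.last p.1.1)
  rw [p.2.2] at this
  simp [Fin.val_last] at this
  omega

end KW

namespace KW

theorem walk_ext {n : ℕ} {w w' : Fin (n + 1) → ℤ × ℤ} (h0 : w 0 = w' 0)
    (hs : ∀ k : Fin n, w k.succ - w k.castSucc = w' k.succ - w' k.castSucc) : w = w' := by
  funext k
  induction k using Fin.induction with
  | zero => exact h0
  | succ k ih =>
    have : w k.succ = (w k.succ - w k.castSucc) + w k.castSucc := by ring
    rw [this, hs k, ih]; ring

instance walksFinite (a b : ℤ) : Finite (Walks a b) := by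
  set M := (a + b - 2).toNat with hM
  have hlt : ∀ p : Walks a b, p.1.1 < M + 1 := by
    intro p; have := length_eq p; omega
  apply Finite.of_injective
    (fun p : Walks a b => (⟨⟨p.1.1, hlt p⟩,
      fun k => decide (p.1.2 k.succ - p.1.2 k.castSucc = (-1, 2))⟩ :
      Σ m : Fin (M + 1), Fin m → Bool))
  rintro ⟨⟨n, w⟩, hw, hend⟩ ⟨⟨n', w'⟩, hw', hend'⟩ h
  obtain ⟨h1, h2⟩ := Sigma.mk.inj_iff.mp h
  have hn : n = n' := by simpa using congrArg Fin.val h1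
  subst hn
  have h2' : (fun k : Fin n => decide (w k.succ - w k.castSucc = (-1, 2)))
      = fun k : Fin n => decide (w' k.succ - w' k.castSucc = (-1, 2)) := eq_of_heq h2
  have hww : w = w' := by
    apply walk_ext (hw.1.trans hw'.1.symm)
    intro k
    have hk := congrFun h2' k
    simp only [decide_eq_decide] at hk
    have m1 := hw.2.1 k
    have m2 := hw'.2.1 k
    simp only [Set.mem_insert_iff, Set.mem_singleton_iff] at m1 m2
    rcases m1 with e1 | e1 <;> rcases m2 with e2 | e2 <;> rw [e1, e2] at hk ⊢ <;> simp_all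
  subst hww
  rfl

end KW

namespace KW

noncomputable def QZ (a b : ℤ) : ℕ := Nat.card (Walks a b)

theorem QZ_of_neg {a b : ℤ} (h : a < 0 ∨ b < 0) : QZ a b = 0 := by
  have : IsEmpty (Walks a b) := by
    constructor
    rintro ⟨⟨n, w⟩, hw, hend⟩
    have h1 := hw.2.2 (Fin.last n)
    rw [show (⟨n, w⟩ : Σ n : ℕ, Fin (n + 1) → ℤ × ℤ).snd (Fin.last n) = (a, b) from hend] at h1
    simp at h1
    omega
  exact Nat.card_of_isEmpty

theorem QZ_of_lt {a b : ℤ} (h : a + b < 2) : QZ a b = 0 := by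
  have : IsEmpty (Walks a b) := by
    constructor
    intro p
    have := length_eq p
    omega
  exact Nat.card_of_isEmpty

def trivWalk : Walks 1 1 :=
  ⟨⟨0, fun _ => (1, 1)⟩, ⟨rfl, fun k => k.elim0, fun _ => by norm_num⟩, rfl⟩

instance : Unique (Walks 1 1) where
  default := trivWalk
  uniq := by
    rintro ⟨⟨n, w⟩, hw, hend⟩
    have hn : n = 0 := by
      have := length_eq ⟨⟨n, w⟩, hw, hend⟩
      simpa using this
    subst hn
    apply Subtype.ext
    exact congrArg (Sigma.mk 0) (funext fun k => by
      have : k = 0 := Fin.fin_one_eq_zero k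
      rw [this]; exact hw.1)

theorem QZ_one_one : QZ 1 1 = 1 := Nat.card_unique

def swapWalk {a b : ℤ} (p : Walks a b) : Walks b a := by
  refine ⟨⟨p.1.1, fun k => (p.1.2 k).swap⟩, ⟨?_, ?_, ?_⟩, ?_⟩
  · show (p.1.2 0).swap = (1, 1)
    rw [p.2.1.1]; rfl
  · intro k
    have hs := p.2.1.2.1 k
    simp only [Set.mem_insert_iff, Set.mem_singleton_iff] at hs ⊢
    show (p.1.2 k.succ).swap - (p.1.2 k.castSucc).swap = _ ∨
      (p.1.2 k.succ).swap - (p.1.2 k.castSucc).swap = _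
    rcases hs with h | h
    · right
      rw [show ((2 : ℤ), (-1 : ℤ)) = ((-1 : ℤ), (2 : ℤ)).swap from rfl, ← h]; rfl
    · left
      rw [show ((-1 : ℤ), (2 : ℤ)) = ((2 : ℤ), (-1 : ℤ)).swap from rfl, ← h]; rfl
  · intro k
    exact ⟨(p.2.1.2.2 k).2, (p.2.1.2.2 k).1⟩
  · show (p.1.2 (Fin.last p.1.1)).swap = (b, a)
    rw [p.2.2]; rfl

theorem swapWalk_involutive {a b : ℤ} (p : Walks a b) : swapWalk (swapWalk p) = p := by
  apply Subtype.ext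
  exact congrArg (Sigma.mk p.1.1) (funext fun k => Prod.swap_swap _)

theorem QZ_symm (a b : ℤ) : QZ a b = QZ b a :=
  Nat.card_congr ⟨swapWalk, swapWalk, swapWalk_involutive, swapWalk_involutive⟩

end KW

namespace KW

theorem snocWalk {n : ℕ} {w : Fin (n + 1) → ℤ × ℤ} (hw : IsKnightWalk n w)
    (s : ℤ × ℤ) (hs : s ∈ ({(-1, 2), (2, -1)} : Set (ℤ × ℤ)))
    (h1 : 0 ≤ (w (Fin.last n) + s).1) (h2 : 0 ≤ (w (Fin.last n) + s).2) :
    IsKnightWalk (n + 1) (Fin.snoc w (w (Fin.last n) + s)) := by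
  refine ⟨?_, ?_, ?_⟩
  · rw [show (0 : Fin (n + 2)) = Fin.castSucc 0 by rfl, Fin.snoc_castSucc]
    exact hw.1
  · intro k
    induction k using Fin.lastCases with
    | last =>
      rw [Fin.succ_last, Fin.snoc_last, Fin.snoc_castSucc]
      simpa using hs
    | cast j =>
      rw [Fin.succ_castSucc, Fin.snoc_castSucc, Fin.snoc_castSucc]
      exact hw.2.1 j
  · intro k
    induction k using Fin.lastCases with
    | last => rw [Fin.snoc_last]; exact ⟨h1, h2⟩
    | cast j => rw [Fin.snoc_castSucc]; exact hw.2.2 j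

end KW

namespace KW

theorem initWalk {n : ℕ} {w : Fin (n + 2) → ℤ × ℤ} (hw : IsKnightWalk (n + 1) w) :
    IsKnightWalk n (Fin.init w) := by
  refine ⟨?_, ?_, ?_⟩
  · show w (Fin.castSucc 0) = (1, 1)
    rw [show Fin.castSucc (0 : Fin (n+1)) = 0 by rfl]
    exact hw.1
  · intro k
    show w k.succ.castSucc - w k.castSucc.castSucc ∈ _
    have := hw.2.1 k.castSucc
    rwa [Fin.succ_castSucc] at this
  · intro k
    exact hw.2.2 k.castSucc

def extendWalk {c d : ℤ} (s : ℤ × ℤ) (hs : s ∈ ({(-1, 2), (2, -1)} : Set (ℤ × ℤ)))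
    (e f : ℤ) (hce : (c, d) + s = (e, f)) (he : 0 ≤ e) (hf : 0 ≤ f)
    (p : Walks c d) : Walks e f := by
  obtain ⟨⟨m, w⟩, hp⟩ := p
  have hw : IsKnightWalk m w := hp.1
  have hend' : w (Fin.last m) = (c, d) := hp.2
  have hval : w (Fin.last m) + s = (e, f) := by rw [hend', hce]
  refine ⟨⟨m + 1, Fin.snoc w (w (Fin.last m) + s)⟩, snocWalk hw s hs ?_ ?_, ?_⟩
  · rw [hval]; exact he
  · rw [hval]; exact hf
  · show (Fin.snoc w (w (Fin.last m) + s) : Fin (m + 2) → ℤ × ℤ) (Fin.last (m + 1)) = (e, f)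
    rw [Fin.snoc_last, hval]

theorem extendWalk_val {c d : ℤ} (s : ℤ × ℤ) (hs : s ∈ ({(-1, 2), (2, -1)} : Set (ℤ × ℤ)))
    (e f : ℤ) (hce : (c, d) + s = (e, f)) (he : 0 ≤ e) (hf : 0 ≤ f) (p : Walks c d) :
    (extendWalk s hs e f hce he hf p).val
      = ⟨p.1.1 + 1, Fin.snoc p.1.2 (p.1.2 (Fin.last p.1.1) + s)⟩ := by
  obtain ⟨⟨m, w⟩, hp⟩ := p
  rfl

theorem QZ_rec {a b : ℤ} (ha : 0 ≤ a) (hb : 0 ≤ b) (hab : 3 ≤ a + b) :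
    QZ a b = QZ (a + 1) (b - 2) + QZ (a - 2) (b + 1) := by
  have hL : ((a + 1, b - 2) : ℤ × ℤ) + (-1, 2) = (a, b) := by
    simp [Prod.ext_iff]
  have hR : ((a - 2, b + 1) : ℤ × ℤ) + (2, -1) = (a, b) := by
    simp only [Prod.mk_add_mk, Prod.mk.injEq]; constructor <;> ring
  have hsL : ((-1 : ℤ), (2 : ℤ)) ∈ ({(-1, 2), (2, -1)} : Set (ℤ × ℤ)) := by simp
  have hsR : ((2 : ℤ), (-1 : ℤ)) ∈ ({(-1, 2), (2, -1)} : Set (ℤ × ℤ)) := by simp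
  set g : Walks (a + 1) (b - 2) ⊕ Walks (a - 2) (b + 1) → Walks a b :=
    Sum.elim (extendWalk (-1, 2) hsL a b hL ha hb) (extendWalk (2, -1) hsR a b hR ha hb)
    with hg
  have key : ∀ (q : Walks (a + 1) (b - 2)) (q' : Walks (a - 2) (b + 1)),
      g (Sum.inl q) ≠ g (Sum.inr q') := by
    rintro ⟨⟨n, w⟩, hq⟩ ⟨⟨n', w'⟩, hq'⟩ h
    have hv := congrArg Subtype.val h
    simp only [hg, Sum.elim_inl, Sum.elim_inr, extendWalk_val] at hv
    obtain ⟨h1, h2⟩ := Sigma.mk.inj_iff.mp hv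
    have hn : n = n' := by omega
    subst hn
    have hww : w = w' := by
      have := congrArg Fin.init (eq_of_heq h2)
      rwa [Fin.init_snoc, Fin.init_snoc] at this
    have he1 : w (Fin.last n) = (a + 1, b - 2) := hq.2
    have he2 : w' (Fin.last n) = (a - 2, b + 1) := hq'.2
    rw [hww, he2] at he1
    have := congrArg Prod.fst he1
    simp at this
    omega
  have hbij : Function.Bijective g := by
    constructor
    · intro x y h
      rcases x with q | q <;> rcases y with q' | q'
      · obtain ⟨⟨n, w⟩, hq⟩ := q
        obtain ⟨⟨n', w'⟩, hq'⟩ := q'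
        have hv := congrArg Subtype.val h
        simp only [hg, Sum.elim_inl, extendWalk_val] at hv
        obtain ⟨h1, h2⟩ := Sigma.mk.inj_iff.mp hv
        have hn : n = n' := by omega
        subst hn
        have hww : w = w' := by
          have := congrArg Fin.init (eq_of_heq h2)
          rwa [Fin.init_snoc, Fin.init_snoc] at this
        subst hww
        rfl
      · exact absurd h (key q q')
      · exact absurd h.symm (key q' q)
      · obtain ⟨⟨n, w⟩, hq⟩ := q
        obtain ⟨⟨n', w'⟩, hq'⟩ := q'
        have hv := congrArg Subtype.val h
        simp only [hg, Sum.elim_inr, extendWalk_val] at hv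
        obtain ⟨h1, h2⟩ := Sigma.mk.inj_iff.mp hv
        have hn : n = n' := by omega
        subst hn
        have hww : w = w' := by
          have := congrArg Fin.init (eq_of_heq h2)
          rwa [Fin.init_snoc, Fin.init_snoc] at this
        subst hww
        rfl
    · rintro ⟨⟨n', w⟩, hw, hend⟩
      have hn' : (n' : ℤ) = a + b - 2 := length_eq ⟨⟨n', w⟩, hw, hend⟩
      obtain ⟨n, rfl⟩ : ∃ n, n' = n + 1 := ⟨n' - 1, by omega⟩
      have hend' : w (Fin.last (n + 1)) = (a, b) := hend
      have hstep := hw.2.1 (Fin.last n)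
      rw [Fin.succ_last] at hstep
      simp only [Set.mem_insert_iff, Set.mem_singleton_iff] at hstep
      have hiw : Fin.init w (Fin.last n) = w ((Fin.last n).castSucc) := rfl
      rcases hstep with h | h
      · have hv2 : w ((Fin.last n).castSucc) = (a + 1, b - 2) := by
          have h3 : w ((Fin.last n).castSucc) = w (Fin.last (n + 1)) - (-1, 2) := by
            rw [← h]; ring
          rw [hend'] at h3
          rw [h3]
          simp only [hend', Prod.mk_sub_mk, Prod.mk.injEq]
          exact ⟨by ring, trivial⟩
        refine ⟨Sum.inl ⟨⟨n, Fin.init w⟩, initWalk hw, hiw.trans hv2⟩, ?_⟩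
        apply Subtype.ext
        simp only [hg, Sum.elim_inl, extendWalk_val]
        have h4 : Fin.init w (Fin.last n) + ((-1 : ℤ), (2 : ℤ)) = w (Fin.last (n + 1)) := by
          rw [hiw, ← h]; ring
        have h5 : (Fin.snoc (Fin.init w) (Fin.init w (Fin.last n) + ((-1 : ℤ), (2 : ℤ))) :
            Fin (n + 2) → ℤ × ℤ) = w := by
          rw [h4, Fin.snoc_init_self]
        exact congrArg (Sigma.mk (n + 1)) h5
      · have hv2 : w ((Fin.last n).castSucc) = (a - 2, b + 1) := by
          have h3 : w ((Fin.last n).castSucc) = w (Fin.last (n + 1)) - (2, -1) := by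
            rw [← h]; ring
          rw [hend'] at h3
          rw [h3]
          simp only [hend', Prod.mk_sub_mk, Prod.mk.injEq]
          exact ⟨trivial, by ring⟩
        refine ⟨Sum.inr ⟨⟨n, Fin.init w⟩, initWalk hw, hiw.trans hv2⟩, ?_⟩
        apply Subtype.ext
        simp only [hg, Sum.elim_inr, extendWalk_val]
        have h4 : Fin.init w (Fin.last n) + ((2 : ℤ), (-1 : ℤ)) = w (Fin.last (n + 1)) := by
          rw [hiw, ← h]; ring
        have h5 : (Fin.snoc (Fin.init w) (Fin.init w (Fin.last n) + ((2 : ℤ), (-1 : ℤ))) :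
            Fin (n + 2) → ℤ × ℤ) = w := by
          rw [h4, Fin.snoc_init_self]
        exact congrArg (Sigma.mk (n + 1)) h5
  have hcard := Nat.card_congr (Equiv.ofBijective g hbij)
  rw [Nat.card_sum] at hcard
  exact hcard.symm

end KW


/-- `Q i j` is the number of knight walks (of any length) ending at `(i, j)`. -/
noncomputable def Q (i j : ℕ) : ℕ :=
  Nat.card {p : Σ n : ℕ, Fin (n + 1) → ℤ × ℤ //
    IsKnightWalk p.1 p.2 ∧ p.2 (Fin.last p.1) = ((i : ℤ), (j : ℤ))}

namespace KW

theorem QZ_of_eq_two {a b : ℤ} (h2 : a + b = 2) (hne : ¬(a = 1 ∧ b = 1)) : QZ a b = 0 := by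
  have : IsEmpty (Walks a b) := by
    constructor
    rintro ⟨⟨n, w⟩, hw, hend⟩
    have hn : n = 0 := by
      have hl : (n : ℤ) = a + b - 2 := length_eq ⟨⟨n, w⟩, hw, hend⟩
      omega
    subst hn
    have hend' : w (Fin.last 0) = (a, b) := hend
    have hst : w 0 = (1, 1) := hw.1
    rw [show Fin.last 0 = 0 from rfl, hst] at hend'
    obtain ⟨h1, h2⟩ := Prod.ext_iff.mp hend'
    exact hne ⟨h1.symm, h2.symm⟩
  exact Nat.card_of_isEmpty

theorem Q_eq (i j : ℕ) : Q i j = QZ (i : ℤ) (j : ℤ) := rfl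

theorem Q_symm (i j : ℕ) : Q i j = Q j i := by
  rw [Q_eq, Q_eq, QZ_symm]

theorem Q_rec (i j : ℕ) : Q i j = (if i = 1 ∧ j = 1 then 1 else 0)
    + (if 2 ≤ j then Q (i + 1) (j - 2) else 0)
    + (if 2 ≤ i then Q (i - 2) (j + 1) else 0) := by
  by_cases h3 : 3 ≤ i + j
  · rw [Q_eq, QZ_rec (by positivity) (by positivity) (by exact_mod_cast h3)]
    rw [if_neg (by omega)]
    congr 1
    · rw [zero_add]
      by_cases hj : 2 ≤ j
      · rw [if_pos hj, Q_eq]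
        congr 2 <;> push_cast [hj] <;> ring
      · rw [if_neg hj, QZ_of_neg (Or.inr (by omega))]
    · by_cases hi : 2 ≤ i
      · rw [if_pos hi, Q_eq]
        congr 2 <;> push_cast [hi] <;> ring
      · rw [if_neg hi, QZ_of_neg (Or.inl (by omega))]
  · have hi : i ≤ 2 := by omega
    have hj : j ≤ 2 := by omega
    interval_cases i <;> interval_cases j <;>
      simp_all [Q_eq] <;>
      first
        | exact QZ_of_lt (by norm_num)
        | exact QZ_one_one
        | (rw [QZ_of_eq_two (by norm_num) (by norm_num), QZ_of_lt (by norm_num)])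
        | omega

end KW


/-- `G(x) = x³ ∑_{i ≥ 0} Q_{i,0} xⁱ`, the generating function of knight walks ending on
the `x`-axis. -/
noncomputable def G : PowerSeries ℚ :=
  PowerSeries.mk fun n => if 3 ≤ n then (Q (n - 3) 0 : ℚ) else 0

/-- Composition `F(f)` of formal power series; this is the usual composition whenever `f`
has zero constant term, since then the coefficient of `xᴺ` in `F(f)` only involves
`f^k` for `k ≤ N`. -/
noncomputable def composePS (F f : PowerSeries ℚ) : PowerSeries ℚ :=
  PowerSeries.mk fun N => PowerSeries.coeff N
    (∑ k ∈ Finset.range (N + 1), PowerSeries.C (PowerSeries.coeff k F) * f ^ k)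

namespace KW
open PowerSeries Finset

noncomputable def A (j : ℕ) : PowerSeries ℚ := PowerSeries.mk fun i => (Q i j : ℚ)

theorem coeff_A (i j : ℕ) : coeff i (A j) = (Q i j : ℚ) := coeff_mk _ _

theorem coeff_G (i : ℕ) : coeff i G = if 3 ≤ i then (Q (i - 3) 0 : ℚ) else 0 := coeff_mk _ _

theorem E (j : ℕ) :
    (if 1 ≤ j then A (j - 1) * X else 0) - A j * X ^ 3 - (if 3 ≤ j then A (j - 3) else 0)
      = (if j = 2 then X ^ 2 else 0) - (if j = 0 then G else 0)
        - (if 3 ≤ j then C ((Q (j - 3) 0 : ℚ)) else 0) := by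
  ext i
  simp only [map_sub, apply_ite (coeff i), map_zero, coeff_A, coeff_G, coeff_C,
    coeff_X_pow]
  rw [show coeff i (A (j - 1) * X) = if 1 ≤ i then (Q (i - 1) (j - 1) : ℚ) else 0 by
    rw [show (X : PowerSeries ℚ) = X ^ 1 from (pow_one X).symm, coeff_mul_X_pow', coeff_A]]
  rw [show coeff i (A j * X ^ 3) = if 3 ≤ i then (Q (i - 3) j : ℚ) else 0 by
    rw [coeff_mul_X_pow', coeff_A]]
  by_cases hj : j = 0
  · subst hj; simp
  by_cases hi : i = 0
  · subst hi
    simp only [if_neg (by omega : ¬ 1 ≤ 0), if_neg (by omega : ¬ 3 ≤ 0), if_neg hj,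
      if_pos rfl]
    rw [Q_symm]
    split_ifs <;> simp_all
  · -- i ≥ 1, j ≥ 1 : use the recurrence at (i-1, j-1)
    have hr := Q_rec (i - 1) (j - 1)
    rw [show i - 1 + 1 = i by omega, show j - 1 + 1 = j by omega,
      show j - 1 - 2 = j - 3 by omega, show i - 1 - 2 = i - 3 by omega] at hr
    simp only [show (2 ≤ j - 1) ↔ (3 ≤ j) from by omega,
      show (2 ≤ i - 1) ↔ (3 ≤ i) from by omega,
      show (i - 1 = 1 ∧ j - 1 = 1) ↔ (i = 2 ∧ j = 2) from by omega] at hr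
    have hrq : (Q (i - 1) (j - 1) : ℚ) = (if i = 2 ∧ j = 2 then 1 else 0)
        + (if 3 ≤ j then (Q i (j - 3) : ℚ) else 0)
        + (if 3 ≤ i then (Q (i - 3) j : ℚ) else 0) := by
      rw [hr]; push_cast; split_ifs <;> norm_num
    rw [if_pos (by omega : 1 ≤ i), if_pos (by omega : 1 ≤ j), hrq, if_neg hj]
    split_ifs <;> first | (exfalso; omega) | ring | omega | simp_all

end KW

namespace KW
open PowerSeries Finset

theorem coeff_xi_pow {ξ : PowerSeries ℚ} (h0 : constantCoeff ξ = 0) {k m : ℕ}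
    (h : m < k) : coeff m (ξ ^ k) = 0 := by
  obtain ⟨g, hg⟩ := X_dvd_iff.mpr h0
  rw [hg, mul_pow, mul_comm, coeff_mul_X_pow', if_neg (by omega)]

theorem hvan {ξ : PowerSeries ℚ} (h0 : constantCoeff ξ = 0) (f : PowerSeries ℚ)
    {k N : ℕ} (h : N < k) : coeff N (f * ξ ^ k) = 0 := by
  rw [coeff_mul]
  apply Finset.sum_eq_zero
  rintro ⟨u, v⟩ huv
  rw [HasAntidiagonal.mem_antidiagonal] at huv
  have hv : v < k := by omega
  rw [coeff_xi_pow h0 hv, mul_zero]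

theorem knight_kernel_equation' (ξ : PowerSeries ℚ)
    (h0 : PowerSeries.constantCoeff ξ = 0)
    (hroot : PowerSeries.X * ξ - PowerSeries.X ^ 3 - ξ ^ 3 = 0) :
    G + composePS G ξ = PowerSeries.X ^ 2 * ξ ^ 2 := by
  have key : ∀ N : ℕ, coeff N (X ^ 2 * ξ ^ 2) - coeff N G
      - coeff N (composePS G ξ) = 0 := by
    intro N
    have pad : ∀ (c : ℕ → PowerSeries ℚ) (m m' : ℕ), m ≤ m' → N < m →
        ∑ j ∈ range m', coeff N (c j * ξ ^ j) = ∑ j ∈ range m, coeff N (c j * ξ ^ j) := by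
      intro c m m' hmm hNm
      symm
      apply Finset.sum_subset (range_subset_range.mpr hmm)
      intro x hx hnx
      have hNx : N < x := by simp only [mem_range] at hx hnx; omega
      exact hvan h0 (c x) hNx
    -- the three "row" families
    set c1 : ℕ → PowerSeries ℚ := fun j => if 1 ≤ j then A (j - 1) * X else 0 with hc1
    set c2 : ℕ → PowerSeries ℚ := fun j => A j * X ^ 3 with hc2
    set c3 : ℕ → PowerSeries ℚ := fun j => if 3 ≤ j then A (j - 3) else 0 with hc3
    have hz : ∀ j : ℕ, coeff N ((A j * X) * ξ ^ (j + 1))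
        - coeff N ((A j * X ^ 3) * ξ ^ j) - coeff N (A j * ξ ^ (j + 3)) = 0 := by
      intro j
      rw [← map_sub, ← map_sub,
        show (A j * X) * ξ ^ (j + 1) - (A j * X ^ 3) * ξ ^ j - A j * ξ ^ (j + 3)
          = (X * ξ - X ^ 3 - ξ ^ 3) * (A j * ξ ^ j) by ring,
        hroot, zero_mul, map_zero]
    -- sum over range (N+4) of row sums is zero
    have S1 : ∑ j ∈ range (N + 4), coeff N (c1 j * ξ ^ j)
        = ∑ j ∈ range (N + 1), coeff N ((A j * X) * ξ ^ (j + 1)) := by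
      rw [pad c1 (N + 2) (N + 4) (by omega) (by omega),
        Finset.sum_range_succ' (fun j => coeff N (c1 j * ξ ^ j)) (N + 1)]
      have h01 : c1 0 * ξ ^ 0 = 0 := by simp [hc1]
      rw [h01, map_zero, add_zero]
      apply Finset.sum_congr rfl
      intro j _
      congr 2
    have S2 : ∑ j ∈ range (N + 4), coeff N (c2 j * ξ ^ j)
        = ∑ j ∈ range (N + 1), coeff N ((A j * X ^ 3) * ξ ^ j) :=
      pad c2 (N + 1) (N + 4) (by omega) (by omega)
    have S3 : ∑ j ∈ range (N + 4), coeff N (c3 j * ξ ^ j)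
        = ∑ j ∈ range (N + 1), coeff N (A j * ξ ^ (j + 3)) := by
      rw [Finset.sum_range_succ' (fun j => coeff N (c3 j * ξ ^ j)) (N + 3),
        Finset.sum_range_succ' (fun j => coeff N (c3 (j + 1) * ξ ^ (j + 1))) (N + 2),
        Finset.sum_range_succ' (fun j => coeff N (c3 (j + 2) * ξ ^ (j + 2))) (N + 1)]
      have h00 : c3 0 * ξ ^ 0 = 0 := by simp [hc3]
      have h11 : c3 1 * ξ ^ 1 = 0 := by simp [hc3]
      have h22 : c3 2 * ξ ^ 2 = 0 := by norm_num [hc3]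
      simp only [h00, h11, h22, map_zero, add_zero]
      apply Finset.sum_congr rfl
      intro j _
      rw [show j + 1 + 2 = j + 3 from by omega]
      congr 2
    have zero_sum : ∑ j ∈ range (N + 4), (coeff N (c1 j * ξ ^ j)
        - coeff N (c2 j * ξ ^ j) - coeff N (c3 j * ξ ^ j)) = 0 := by
      rw [Finset.sum_sub_distrib, Finset.sum_sub_distrib, S1, S2, S3,
        ← Finset.sum_sub_distrib, ← Finset.sum_sub_distrib]
      exact Finset.sum_eq_zero fun j _ => hz j
    -- rewrite each row term via E
    have row : ∀ j : ℕ, coeff N (c1 j * ξ ^ j) - coeff N (c2 j * ξ ^ j)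
        - coeff N (c3 j * ξ ^ j)
        = coeff N ((if j = 2 then (X : PowerSeries ℚ) ^ 2 else 0) * ξ ^ j)
          - coeff N ((if j = 0 then G else 0) * ξ ^ j)
          - coeff N ((if 3 ≤ j then C ((Q (j - 3) 0 : ℚ)) else 0) * ξ ^ j) := by
      intro j
      rw [← map_sub, ← map_sub, ← map_sub, ← map_sub, ← sub_mul, ← sub_mul,
        ← sub_mul, ← sub_mul, hc1, hc2, hc3]
      rw [E j]
    have zero_sum' : ∑ j ∈ range (N + 4),
        (coeff N ((if j = 2 then (X : PowerSeries ℚ) ^ 2 else 0) * ξ ^ j)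
          - coeff N ((if j = 0 then G else 0) * ξ ^ j)
          - coeff N ((if 3 ≤ j then C ((Q (j - 3) 0 : ℚ)) else 0) * ξ ^ j)) = 0 := by
      rw [← Finset.sum_congr rfl fun j _ => row j]
      exact zero_sum
    -- identify the three target sums
    have T1 : ∑ j ∈ range (N + 4),
        coeff N ((if j = 2 then (X : PowerSeries ℚ) ^ 2 else 0) * ξ ^ j)
        = coeff N (X ^ 2 * ξ ^ 2) := by
      rw [Finset.sum_eq_single 2]
      · rw [if_pos rfl]
      · intro b _ hb; rw [if_neg hb, zero_mul, map_zero]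
      · intro h; exact absurd (mem_range.mpr (by omega)) h
    have T2 : ∑ j ∈ range (N + 4), coeff N ((if j = 0 then G else 0) * ξ ^ j)
        = coeff N G := by
      rw [Finset.sum_eq_single 0]
      · rw [if_pos rfl, pow_zero, mul_one]
      · intro b _ hb; rw [if_neg hb, zero_mul, map_zero]
      · intro h; exact absurd (mem_range.mpr (by omega)) h
    have T3 : ∑ j ∈ range (N + 4),
        coeff N ((if 3 ≤ j then C ((Q (j - 3) 0 : ℚ)) else 0) * ξ ^ j)
        = coeff N (composePS G ξ) := by
      rw [pad _ (N + 1) (N + 4) (by omega) (by omega)]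
      rw [show coeff N (composePS G ξ)
          = coeff N (∑ k ∈ range (N + 1), C (coeff k G) * ξ ^ k) from coeff_mk _ _]
      rw [map_sum]
      apply Finset.sum_congr rfl
      intro k _
      congr 2
      rw [coeff_G]
      split_ifs with h
      · rfl
      · rw [map_zero]
    rw [← T1, ← T2, ← T3, ← Finset.sum_sub_distrib, ← Finset.sum_sub_distrib]
    exact zero_sum'
  ext N
  have hN := key N
  rw [map_add]
  linarith [hN]

end KW

/-- If `ξ` is the (unique) formal power series with zero constant term satisfying
`xξ − x³ − ξ³ = 0`, then `G(x) + G(ξ(x)) = x² ξ(x)²` in `ℚ[[x]]`. -/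
theorem knight_kernel_equation (ξ : PowerSeries ℚ)
    (h0 : PowerSeries.constantCoeff ξ = 0)
    (hroot : PowerSeries.X * ξ - PowerSeries.X ^ 3 - ξ ^ 3 = 0) :
    G + composePS G ξ = PowerSeries.X ^ 2 * ξ ^ 2 := by
  exact KW.knight_kernel_equation' ξ h0 hroot
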